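/- Every complex 2×2×2 hypermatrix can be reduced, by invertible linear changes of coordinates in the three factors, to exactly one of the four canonical forms whose trilinear polynomials are: (I) x_1 y_1 z_1; (II) x_1 y_1 z_1 + x_2 y_2 z_1 (up to permuting the roles of the three factors); (III) x_1 y_1 z_2 + x_1 y_2 z_1 + x_2 y_1 z_1; (IV) x_1 y_1 z_1 + x_2 y_2 z_2. These have tensor rank 1, 2, 3, 2 respectively. -/

import Mathlib

/-- Equivalence of 2×2×2 hypermatrices under invertible linear changes of
coordinates in the three factors. -/
def TensorEquiv (A B : Fin 2 → Fin 2 → Fin 2 → ℂ) : Prop :=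
  ∃ C D E : Matrix (Fin 2) (Fin 2) ℂ,
    IsUnit C.det ∧ IsUnit D.det ∧ IsUnit E.det ∧
    ∀ i j k, B i j k = ∑ i', ∑ j', ∑ k', C i' i * D j' j * E k' k * A i' j' k'

/-- Tensor rank: minimal length of a decomposition into decomposable tensors. -/
noncomputable def Trk (A : Fin 2 → Fin 2 → Fin 2 → ℂ) : ℕ :=
  sInf {n : ℕ | ∃ u v w : Fin n → Fin 2 → ℂ,
    ∀ i j k, A i j k = ∑ m, u m i * v m j * w m k}

/-- Canonical form I: x₁y₁z₁. -/
noncomputable def T1 : Fin 2 → Fin 2 → Fin 2 → ℂ := fun i j k =>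
  if i = 0 ∧ j = 0 ∧ k = 0 then 1 else 0

/-- Canonical form II with the x-factor in the special role: x₁y₁z₁ + x₁y₂z₂. -/
noncomputable def T2x : Fin 2 → Fin 2 → Fin 2 → ℂ := fun i j k =>
  if i = 0 ∧ j = k then 1 else 0

/-- Canonical form II with the y-factor in the special role: x₁y₁z₁ + x₂y₁z₂. -/
noncomputable def T2y : Fin 2 → Fin 2 → Fin 2 → ℂ := fun i j k =>
  if j = 0 ∧ i = k then 1 else 0

/-- Canonical form II: x₁y₁z₁ + x₂y₂z₁. -/
noncomputable def T2z : Fin 2 → Fin 2 → Fin 2 → ℂ := fun i j k =>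
  if k = 0 ∧ i = j then 1 else 0

/-- Canonical form III: x₁y₁z₂ + x₁y₂z₁ + x₂y₁z₁. -/
noncomputable def T3 : Fin 2 → Fin 2 → Fin 2 → ℂ := fun i j k =>
  if (i = 0 ∧ j = 0 ∧ k = 1) ∨ (i = 0 ∧ j = 1 ∧ k = 0) ∨ (i = 1 ∧ j = 0 ∧ k = 0)
  then 1 else 0

/-- Canonical form IV: x₁y₁z₁ + x₂y₂z₂. -/
noncomputable def T4 : Fin 2 → Fin 2 → Fin 2 → ℂ := fun i j k =>
  if i = j ∧ j = k then 1 else 0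

section TensorAux
open Matrix

/-- the action -/
noncomputable def act (C D E : Matrix (Fin 2) (Fin 2) ℂ) (A : Fin 2 → Fin 2 → Fin 2 → ℂ) :
    Fin 2 → Fin 2 → Fin 2 → ℂ :=
  fun i j k => ∑ i', ∑ j', ∑ k', C i' i * D j' j * E k' k * A i' j' k'

lemma tensorEquiv_iff (A B : Fin 2 → Fin 2 → Fin 2 → ℂ) :
    TensorEquiv A B ↔ ∃ C D E : Matrix (Fin 2) (Fin 2) ℂ,
      IsUnit C.det ∧ IsUnit D.det ∧ IsUnit E.det ∧ B = act C D E A := by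
  unfold TensorEquiv act
  constructor
  · rintro ⟨C, D, E, hC, hD, hE, h⟩
    exact ⟨C, D, E, hC, hD, hE, by funext i j k; exact h i j k⟩
  · rintro ⟨C, D, E, hC, hD, hE, h⟩
    exact ⟨C, D, E, hC, hD, hE, fun i j k => by rw [h]⟩

lemma act_one (A : Fin 2 → Fin 2 → Fin 2 → ℂ) : act 1 1 1 A = A := by
  funext i j k
  simp only [act, Fin.sum_univ_two, Matrix.one_apply]
  fin_cases i <;> fin_cases j <;> fin_cases k <;> norm_num

lemma act_act (C D E C' D' E' : Matrix (Fin 2) (Fin 2) ℂ) (A : Fin 2 → Fin 2 → Fin 2 → ℂ) :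
    act C D E (act C' D' E' A) = act (C' * C) (D' * D) (E' * E) A := by
  funext i j k
  simp only [act, Fin.sum_univ_two, Matrix.mul_apply]
  ring_nf

lemma TensorEquiv.refl (A : Fin 2 → Fin 2 → Fin 2 → ℂ) : TensorEquiv A A := by
  rw [tensorEquiv_iff]
  exact ⟨1, 1, 1, by simp, by simp, by simp, (act_one A).symm⟩

lemma TensorEquiv.symm {A B : Fin 2 → Fin 2 → Fin 2 → ℂ} (h : TensorEquiv A B) :
    TensorEquiv B A := by
  rw [tensorEquiv_iff] at h ⊢
  obtain ⟨C, D, E, hC, hD, hE, rfl⟩ := h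
  refine ⟨C⁻¹, D⁻¹, E⁻¹, ?_, ?_, ?_, ?_⟩
  · exact Matrix.isUnit_nonsing_inv_det C hC
  · exact Matrix.isUnit_nonsing_inv_det D hD
  · exact Matrix.isUnit_nonsing_inv_det E hE
  · rw [act_act, Matrix.mul_nonsing_inv _ hC, Matrix.mul_nonsing_inv _ hD,
      Matrix.mul_nonsing_inv _ hE, act_one]

set_option maxHeartbeats 1000000 in
lemma TensorEquiv.trans {A B C : Fin 2 → Fin 2 → Fin 2 → ℂ}
    (h1 : TensorEquiv A B) (h2 : TensorEquiv B C) : TensorEquiv A C := by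
  rw [tensorEquiv_iff] at h1 h2 ⊢
  obtain ⟨P, Q, R, hP, hQ, hR, hB⟩ := h1
  obtain ⟨P', Q', R', hP', hQ', hR', hC⟩ := h2
  refine ⟨P * P', Q * Q', R * R', ?_, ?_, ?_, by rw [hC, hB, act_act]⟩
  · rw [Matrix.det_mul]; exact hP.mul hP'
  · rw [Matrix.det_mul]; exact hQ.mul hQ'
  · rw [Matrix.det_mul]; exact hR.mul hR'

/-- tensor from its two z-slices -/
noncomputable def ofS (M N : Matrix (Fin 2) (Fin 2) ℂ) : Fin 2 → Fin 2 → Fin 2 → ℂ :=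
  fun i j k => if k = 0 then M i j else N i j

lemma ofS_self (A : Fin 2 → Fin 2 → Fin 2 → ℂ) :
    A = ofS (Matrix.of fun i j => A i j 0) (Matrix.of fun i j => A i j 1) := by
  funext i j k
  fin_cases k <;> simp [ofS]

lemma act_ofS (C D E : Matrix (Fin 2) (Fin 2) ℂ) (M N : Matrix (Fin 2) (Fin 2) ℂ) :
    act C D E (ofS M N) =
      ofS (E 0 0 • (Cᵀ * M * D) + E 1 0 • (Cᵀ * N * D))
          (E 0 1 • (Cᵀ * M * D) + E 1 1 • (Cᵀ * N * D)) := by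
  funext i j k
  fin_cases k <;>
    simp only [act, ofS, Fin.sum_univ_two, Matrix.mul_apply, Matrix.transpose_apply,
      Matrix.add_apply, Matrix.smul_apply, smul_eq_mul] <;>
    norm_num <;> ring

/-- equivalence by row/column operations on slices -/
lemma equiv_ofS_rc (M N P Q : Matrix (Fin 2) (Fin 2) ℂ)
    (hP : IsUnit P.det) (hQ : IsUnit Q.det) :
    TensorEquiv (ofS M N) (ofS (P * M * Q) (P * N * Q)) := by
  rw [tensorEquiv_iff]
  refine ⟨Pᵀ, Q, 1, by simpa using hP, hQ, by simp, ?_⟩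
  rw [act_ofS]
  congr 1 <;> simp [Matrix.one_apply]

/-- equivalence by combining slices -/
lemma equiv_ofS_E (M N : Matrix (Fin 2) (Fin 2) ℂ) (E : Matrix (Fin 2) (Fin 2) ℂ)
    (hE : IsUnit E.det) :
    TensorEquiv (ofS M N) (ofS (E 0 0 • M + E 1 0 • N) (E 0 1 • M + E 1 1 • N)) := by
  rw [tensorEquiv_iff]
  refine ⟨1, 1, E, by simp, by simp, hE, ?_⟩
  rw [act_ofS]
  congr 1 <;> simp
lemma decomp_act {n : ℕ} (C D E : Matrix (Fin 2) (Fin 2) ℂ) (A : Fin 2 → Fin 2 → Fin 2 → ℂ)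
    (u v w : Fin n → Fin 2 → ℂ)
    (h : ∀ i j k, A i j k = ∑ m, u m i * v m j * w m k) :
    ∀ i j k, act C D E A i j k =
      ∑ m : Fin n, (∑ i', C i' i * u m i') * (∑ j', D j' j * v m j') * (∑ k', E k' k * w m k') := by
  intro i j k
  simp only [act, h, Fin.sum_univ_two, Finset.mul_sum, ← Finset.sum_add_distrib]
  exact Finset.sum_congr rfl fun m _ => by ring

lemma trkSet_subset {A B : Fin 2 → Fin 2 → Fin 2 → ℂ} (h : TensorEquiv A B) :
    {n : ℕ | ∃ u v w : Fin n → Fin 2 → ℂ, ∀ i j k, A i j k = ∑ m, u m i * v m j * w m k} ⊆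
    {n : ℕ | ∃ u v w : Fin n → Fin 2 → ℂ, ∀ i j k, B i j k = ∑ m, u m i * v m j * w m k} := by
  rw [tensorEquiv_iff] at h
  obtain ⟨C, D, E, hC, hD, hE, hB⟩ := h
  rintro n ⟨u, v, w, hd⟩
  refine ⟨fun m i => ∑ i', C i' i * u m i', fun m j => ∑ j', D j' j * v m j',
    fun m k => ∑ k', E k' k * w m k', ?_⟩
  intro i j k
  rw [hB]
  exact decomp_act C D E A u v w hd i j k

lemma Trk_eq_of_equiv {A B : Fin 2 → Fin 2 → Fin 2 → ℂ} (h : TensorEquiv A B) :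
    Trk A = Trk B := by
  unfold Trk
  congr 1
  exact Set.Subset.antisymm (trkSet_subset h) (trkSet_subset h.symm)

def DegX (A : Fin 2 → Fin 2 → Fin 2 → ℂ) : Prop :=
  ∃ a b : ℂ, (a ≠ 0 ∨ b ≠ 0) ∧ ∀ j k, a * A 0 j k + b * A 1 j k = 0
def DegY (A : Fin 2 → Fin 2 → Fin 2 → ℂ) : Prop :=
  ∃ a b : ℂ, (a ≠ 0 ∨ b ≠ 0) ∧ ∀ i k, a * A i 0 k + b * A i 1 k = 0
def DegZ (A : Fin 2 → Fin 2 → Fin 2 → ℂ) : Prop :=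
  ∃ a b : ℂ, (a ≠ 0 ∨ b ≠ 0) ∧ ∀ i j, a * A i j 0 + b * A i j 1 = 0

/-- helper: solve for new coefficients through an invertible 2x2 matrix -/
lemma coeff_solve (E : Matrix (Fin 2) (Fin 2) ℂ) (hE : IsUnit E.det) (a b : ℂ) :
    ∃ a' b' : ℂ, a' * E 0 0 + b' * E 0 1 = a ∧ a' * E 1 0 + b' * E 1 1 = b := by
  have hd : E.det ≠ 0 := hE.ne_zero
  rw [Matrix.det_fin_two] at hd
  refine ⟨(a * E 1 1 - b * E 0 1) / (E 0 0 * E 1 1 - E 0 1 * E 1 0),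
          (b * E 0 0 - a * E 1 0) / (E 0 0 * E 1 1 - E 0 1 * E 1 0), ?_, ?_⟩ <;>
    rw [div_mul_eq_mul_div, div_mul_eq_mul_div, ← add_div, div_eq_iff hd] <;> ring

lemma degZ_of_act {A B : Fin 2 → Fin 2 → Fin 2 → ℂ} (h : TensorEquiv A B) :
    DegZ A → DegZ B := by
  rw [tensorEquiv_iff] at h
  obtain ⟨C, D, E, hC, hD, hE, rfl⟩ := h
  rintro ⟨a, b, hab, hdep⟩
  obtain ⟨a', b', k1, k2⟩ := coeff_solve E hE a b
  refine ⟨a', b', ?_, ?_⟩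
  · by_contra hcon
    push_neg at hcon
    rcases hab with ha | hb
    · exact ha (by rw [← k1, hcon.1, hcon.2]; ring)
    · exact hb (by rw [← k2, hcon.1, hcon.2]; ring)
  · intro i j

    simp only [act, Fin.sum_univ_two]
    linear_combination (C 0 i * D 0 j) * hdep 0 0 + (C 0 i * D 1 j) * hdep 0 1 +
      (C 1 i * D 0 j) * hdep 1 0 + (C 1 i * D 1 j) * hdep 1 1 +
      (C 0 i * D 0 j * A 0 0 0 + C 0 i * D 1 j * A 0 1 0 + C 1 i * D 0 j * A 1 0 0 +
        C 1 i * D 1 j * A 1 1 0) * k1 +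
      (C 0 i * D 0 j * A 0 0 1 + C 0 i * D 1 j * A 0 1 1 + C 1 i * D 0 j * A 1 0 1 +
        C 1 i * D 1 j * A 1 1 1) * k2

lemma degZ_iff_of_equiv {A B : Fin 2 → Fin 2 → Fin 2 → ℂ} (h : TensorEquiv A B) :
    DegZ A ↔ DegZ B := ⟨degZ_of_act h, degZ_of_act h.symm⟩

lemma degX_of_act {A B : Fin 2 → Fin 2 → Fin 2 → ℂ} (h : TensorEquiv A B) :
    DegX A → DegX B := by
  rw [tensorEquiv_iff] at h
  obtain ⟨C, D, E, hC, hD, hE, rfl⟩ := h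
  rintro ⟨a, b, hab, hdep⟩
  obtain ⟨a', b', k1, k2⟩ := coeff_solve C hC a b
  refine ⟨a', b', ?_, ?_⟩
  · by_contra hcon
    push_neg at hcon
    rcases hab with ha | hb
    · exact ha (by rw [← k1, hcon.1, hcon.2]; ring)
    · exact hb (by rw [← k2, hcon.1, hcon.2]; ring)
  · intro j k

    simp only [act, Fin.sum_univ_two]
    linear_combination (D 0 j * E 0 k) * hdep 0 0 + (D 0 j * E 1 k) * hdep 0 1 +
      (D 1 j * E 0 k) * hdep 1 0 + (D 1 j * E 1 k) * hdep 1 1 +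
      (D 0 j * E 0 k * A 0 0 0 + D 0 j * E 1 k * A 0 0 1 + D 1 j * E 0 k * A 0 1 0 +
        D 1 j * E 1 k * A 0 1 1) * k1 +
      (D 0 j * E 0 k * A 1 0 0 + D 0 j * E 1 k * A 1 0 1 + D 1 j * E 0 k * A 1 1 0 +
        D 1 j * E 1 k * A 1 1 1) * k2

lemma degX_iff_of_equiv {A B : Fin 2 → Fin 2 → Fin 2 → ℂ} (h : TensorEquiv A B) :
    DegX A ↔ DegX B := ⟨degX_of_act h, degX_of_act h.symm⟩

lemma degY_of_act {A B : Fin 2 → Fin 2 → Fin 2 → ℂ} (h : TensorEquiv A B) :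
    DegY A → DegY B := by
  rw [tensorEquiv_iff] at h
  obtain ⟨C, D, E, hC, hD, hE, rfl⟩ := h
  rintro ⟨a, b, hab, hdep⟩
  obtain ⟨a', b', k1, k2⟩ := coeff_solve D hD a b
  refine ⟨a', b', ?_, ?_⟩
  · by_contra hcon
    push_neg at hcon
    rcases hab with ha | hb
    · exact ha (by rw [← k1, hcon.1, hcon.2]; ring)
    · exact hb (by rw [← k2, hcon.1, hcon.2]; ring)
  · intro i k

    simp only [act, Fin.sum_univ_two]
    linear_combination (C 0 i * E 0 k) * hdep 0 0 + (C 0 i * E 1 k) * hdep 0 1 +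
      (C 1 i * E 0 k) * hdep 1 0 + (C 1 i * E 1 k) * hdep 1 1 +
      (C 0 i * E 0 k * A 0 0 0 + C 0 i * E 1 k * A 0 0 1 + C 1 i * E 0 k * A 1 0 0 +
        C 1 i * E 1 k * A 1 0 1) * k1 +
      (C 0 i * E 0 k * A 0 1 0 + C 0 i * E 1 k * A 0 1 1 + C 1 i * E 0 k * A 1 1 0 +
        C 1 i * E 1 k * A 1 1 1) * k2

lemma degY_iff_of_equiv {A B : Fin 2 → Fin 2 → Fin 2 → ℂ} (h : TensorEquiv A B) :
    DegY A ↔ DegY B := ⟨degY_of_act h, degY_of_act h.symm⟩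
/-- standard basis vector -/
noncomputable def ev (m : Fin 2) : Fin 2 → ℂ := fun i => if i = m then 1 else 0

lemma sInf_eq_of (S : Set ℕ) (r : ℕ) (hmem : r ∈ S) (hlow : ∀ m, m < r → m ∉ S) :
    sInf S = r := by
  have h1 := Nat.sInf_le hmem
  have h2 := Nat.sInf_mem (⟨r, hmem⟩ : S.Nonempty)
  rcases lt_or_ge (sInf S) r with h | h
  · exact absurd h2 (hlow _ h)
  · omega

lemma pad {A : Fin 2 → Fin 2 → Fin 2 → ℂ} {n : ℕ}
    (h : ∃ u v w : Fin n → Fin 2 → ℂ, ∀ i j k, A i j k = ∑ m, u m i * v m j * w m k) :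
    ∃ u v w : Fin (n + 1) → Fin 2 → ℂ, ∀ i j k, A i j k = ∑ m, u m i * v m j * w m k := by
  obtain ⟨u, v, w, h⟩ := h
  refine ⟨Fin.snoc u 0, Fin.snoc v 0, Fin.snoc w 0, fun i j k => ?_⟩
  rw [h]
  simp [Fin.sum_univ_castSucc]

lemma Trk_T1 : Trk T1 = 1 := by
  unfold Trk
  apply sInf_eq_of
  · exact ⟨fun _ => ev 0, fun _ => ev 0, fun _ => ev 0, by
      intro i j k; fin_cases i <;> fin_cases j <;> fin_cases k <;>
        simp [T1, ev, Fin.sum_univ_one]⟩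
  · intro m hm
    interval_cases m
    rintro ⟨u, v, w, h⟩
    simpa [T1] using h 0 0 0

lemma Trk_T2x : Trk T2x = 2 := by
  unfold Trk
  apply sInf_eq_of
  · refine ⟨fun _ => ev 0, fun m j => if j = m then 1 else 0, fun m k => if k = m then 1 else 0, ?_⟩
    intro i j k; fin_cases i <;> fin_cases j <;> fin_cases k <;>
      simp [T2x, ev, Fin.sum_univ_two]
  · intro m hm
    interval_cases m
    · rintro ⟨u, v, w, h⟩
      simpa [T2x] using h 0 0 0
    · rintro ⟨u, v, w, h⟩
      have h1 := h 0 0 0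
      have h2 := h 0 1 1
      have h3 := h 0 0 1
      simp [T2x, Fin.sum_univ_one] at h1 h2 h3
      rcases h3 with (h0 | h0) | h0
      · rw [h0] at h1; norm_num at h1
      · rw [h0] at h1; norm_num at h1
      · rw [h0] at h2; norm_num at h2

lemma Trk_T2y : Trk T2y = 2 := by
  unfold Trk
  apply sInf_eq_of
  · refine ⟨fun m i => if i = m then 1 else 0, fun _ => ev 0, fun m k => if k = m then 1 else 0, ?_⟩
    intro i j k; fin_cases i <;> fin_cases j <;> fin_cases k <;>
      simp [T2y, ev, Fin.sum_univ_two]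
  · intro m hm
    interval_cases m
    · rintro ⟨u, v, w, h⟩
      simpa [T2y] using h 0 0 0
    · rintro ⟨u, v, w, h⟩
      have h1 := h 0 0 0
      have h2 := h 1 0 1
      have h3 := h 0 0 1
      simp [T2y, Fin.sum_univ_one] at h1 h2 h3
      rcases h3 with (h0 | h0) | h0
      · rw [h0] at h1; norm_num at h1
      · rw [h0] at h1; norm_num at h1
      · rw [h0] at h2; norm_num at h2

lemma Trk_T2z : Trk T2z = 2 := by
  unfold Trk
  apply sInf_eq_of
  · refine ⟨fun m i => if i = m then 1 else 0, fun m j => if j = m then 1 else 0, fun _ => ev 0, ?_⟩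
    intro i j k; fin_cases i <;> fin_cases j <;> fin_cases k <;>
      simp [T2z, ev, Fin.sum_univ_two]
  · intro m hm
    interval_cases m
    · rintro ⟨u, v, w, h⟩
      simpa [T2z] using h 0 0 0
    · rintro ⟨u, v, w, h⟩
      have h1 := h 0 0 0
      have h2 := h 1 1 0
      have h3 := h 0 1 0
      simp [T2z, Fin.sum_univ_one] at h1 h2 h3
      rcases h3 with (h0 | h0) | h0
      · rw [h0] at h1; norm_num at h1
      · rw [h0] at h2; norm_num at h2
      · rw [h0] at h1; norm_num at h1

lemma Trk_T4 : Trk T4 = 2 := by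
  unfold Trk
  apply sInf_eq_of
  · refine ⟨fun m i => if i = m then 1 else 0, fun m j => if j = m then 1 else 0,
      fun m k => if k = m then 1 else 0, ?_⟩
    intro i j k; fin_cases i <;> fin_cases j <;> fin_cases k <;>
      simp [T4, Fin.sum_univ_two]
  · intro m hm
    interval_cases m
    · rintro ⟨u, v, w, h⟩
      simpa [T4] using h 0 0 0
    · rintro ⟨u, v, w, h⟩
      have h1 := h 0 0 0
      have h2 := h 1 1 1
      have h3 := h 0 1 1
      simp [T4, Fin.sum_univ_one] at h1 h2 h3
      rcases h3 with (h0 | h0) | h0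
      · rw [h0] at h1; norm_num at h1
      · rw [h0] at h2; norm_num at h2
      · rw [h0] at h2; norm_num at h2

lemma T3_not_rank2 :
    ¬ ∃ u v w : Fin 2 → Fin 2 → ℂ, ∀ i j k, T3 i j k = ∑ m, u m i * v m j * w m k := by
  rintro ⟨u, v, w, h⟩
  have h000 := h 0 0 0
  have h001 := h 0 0 1
  have h010 := h 0 1 0
  have h100 := h 1 0 0
  have h011 := h 0 1 1
  have h101 := h 1 0 1
  have h110 := h 1 1 0
  have h111 := h 1 1 1
  simp [T3, Fin.sum_univ_two] at h000 h001 h010 h100 h011 h101 h110 h111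
  have key : w 0 0 * w 1 0 *
      ((u 0 0 * u 1 1 - u 0 1 * u 1 0) * (v 0 0 * v 1 1 - v 0 1 * v 1 0)) = -1 := by
    linear_combination (u 0 1 * v 0 0 * w 0 0 + u 1 1 * v 1 0 * w 1 0) * h010 + h100 -
      (u 0 1 * v 0 1 * w 0 0 + u 1 1 * v 1 1 * w 1 0) * h000
  have key2 : w 0 1 * w 1 1 *
      ((u 0 0 * u 1 1 - u 0 1 * u 1 0) * (v 0 0 * v 1 1 - v 0 1 * v 1 0)) = 0 := by
    linear_combination (-(u 0 0 * v 0 0 * w 0 1 + u 1 0 * v 1 0 * w 1 1)) * h111 +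
      (u 0 1 * v 0 0 * w 0 1 + u 1 1 * v 1 0 * w 1 1) * h011
  have hne : w 0 0 * w 1 0 *
      ((u 0 0 * u 1 1 - u 0 1 * u 1 0) * (v 0 0 * v 1 1 - v 0 1 * v 1 0)) ≠ 0 := by
    rw [key]; norm_num
  have he : w 0 0 ≠ 0 := left_ne_zero_of_mul (left_ne_zero_of_mul hne)
  have hk : w 1 0 ≠ 0 := right_ne_zero_of_mul (left_ne_zero_of_mul hne)
  have hXY := right_ne_zero_of_mul hne
  have hX : u 0 0 * u 1 1 - u 0 1 * u 1 0 ≠ 0 := left_ne_zero_of_mul hXY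
  have hY : v 0 0 * v 1 1 - v 0 1 * v 1 0 ≠ 0 := right_ne_zero_of_mul hXY
  have hfl : w 0 1 * w 1 1 = 0 := by
    rcases mul_eq_zero.mp key2 with h' | h'
    · exact h'
    · exact absurd h' hXY
  rcases mul_eq_zero.mp hfl with hf | hl
  · -- w 0 1 = 0
    have hgil : u 1 0 * v 1 0 * w 1 1 = 1 := by
      linear_combination -h001 - (u 0 0 * v 0 0) * hf
    have hgilne : u 1 0 * v 1 0 * w 1 1 ≠ 0 := by rw [hgil]; norm_num
    have hg : u 1 0 ≠ 0 := left_ne_zero_of_mul (left_ne_zero_of_mul hgilne)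
    have hi : v 1 0 ≠ 0 := right_ne_zero_of_mul (left_ne_zero_of_mul hgilne)
    have hl' : w 1 1 ≠ 0 := right_ne_zero_of_mul hgilne
    have hj : v 1 1 = 0 := by
      have h2 : u 1 0 * v 1 1 * w 1 1 = 0 := by
        linear_combination -h011 - (u 0 0 * v 0 1) * hf
      rcases mul_eq_zero.mp h2 with h' | h'
      · rcases mul_eq_zero.mp h' with h'' | h''
        · exact absurd h'' hg
        · exact h''
      · exact absurd h' hl'
    have hh0 : u 1 1 = 0 := by
      have h2 : u 1 1 * v 1 0 * w 1 1 = 0 := by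
        linear_combination -h101 - (u 0 1 * v 0 0) * hf
      rcases mul_eq_zero.mp h2 with h' | h'
      · rcases mul_eq_zero.mp h' with h'' | h''
        · exact h''
        · exact absurd h'' hi
      · exact absurd h' hl'
    have hb : u 0 1 ≠ 0 := by
      intro h0; apply hX; rw [hh0, h0]; ring
    have hd : v 0 1 ≠ 0 := by
      intro h0; apply hY; rw [hj, h0]; ring
    have hbde : u 0 1 * v 0 1 * w 0 0 = 0 := by
      linear_combination -h110 - (v 1 1 * w 1 0) * hh0
    exact (mul_ne_zero (mul_ne_zero hb hd) he) hbde
  · -- w 1 1 = 0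
    have hacf : u 0 0 * v 0 0 * w 0 1 = 1 := by
      linear_combination -h001 - (u 1 0 * v 1 0) * hl
    have hacfne : u 0 0 * v 0 0 * w 0 1 ≠ 0 := by rw [hacf]; norm_num
    have ha : u 0 0 ≠ 0 := left_ne_zero_of_mul (left_ne_zero_of_mul hacfne)
    have hc : v 0 0 ≠ 0 := right_ne_zero_of_mul (left_ne_zero_of_mul hacfne)
    have hf' : w 0 1 ≠ 0 := right_ne_zero_of_mul hacfne
    have hd : v 0 1 = 0 := by
      have h2 : u 0 0 * v 0 1 * w 0 1 = 0 := by
        linear_combination -h011 - (u 1 0 * v 1 1) * hl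
      rcases mul_eq_zero.mp h2 with h' | h'
      · rcases mul_eq_zero.mp h' with h'' | h''
        · exact absurd h'' ha
        · exact h''
      · exact absurd h' hf'
    have hb : u 0 1 = 0 := by
      have h2 : u 0 1 * v 0 0 * w 0 1 = 0 := by
        linear_combination -h101 - (u 1 1 * v 1 0) * hl
      rcases mul_eq_zero.mp h2 with h' | h'
      · rcases mul_eq_zero.mp h' with h'' | h''
        · exact h''
        · exact absurd h'' hc
      · exact absurd h' hf'
    have hh' : u 1 1 ≠ 0 := by
      intro h0; apply hX; rw [hb, h0]; ring
    have hj' : v 1 1 ≠ 0 := by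
      intro h0; apply hY; rw [hd, h0]; ring
    have hhjk : u 1 1 * v 1 1 * w 1 0 = 0 := by
      linear_combination -h110 - (v 0 1 * w 0 0) * hb
    exact (mul_ne_zero (mul_ne_zero hh' hj') hk) hhjk

lemma Trk_T3 : Trk T3 = 3 := by
  unfold Trk
  apply sInf_eq_of
  · refine ⟨fun m i => if m = 2 then (if i = 1 then 1 else 0) else (if i = 0 then 1 else 0),
      fun m j => if m = 1 then (if j = 1 then 1 else 0) else (if j = 0 then 1 else 0),
      fun m k => if m = 0 then (if k = 1 then 1 else 0) else (if k = 0 then 1 else 0), ?_⟩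
    intro i j k; fin_cases i <;> fin_cases j <;> fin_cases k <;>
      simp [T3, Fin.sum_univ_three]
  · intro m hm
    interval_cases m
    · intro hmem; exact T3_not_rank2 (pad (pad hmem))
    · intro hmem; exact T3_not_rank2 (pad hmem)
    · exact T3_not_rank2
lemma degX_T2x : DegX T2x := by
  refine ⟨0, 1, Or.inr one_ne_zero, fun j k => ?_⟩
  simp [T2x]

lemma degY_T2y : DegY T2y := by
  refine ⟨0, 1, Or.inr one_ne_zero, fun i k => ?_⟩
  simp [T2y]

lemma degZ_T2z : DegZ T2z := by
  refine ⟨0, 1, Or.inr one_ne_zero, fun i j => ?_⟩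
  simp [T2z]

lemma not_degX_T2y : ¬ DegX T2y := by
  rintro ⟨a, b, hab, h⟩
  have h1 := h 0 0
  have h2 := h 0 1
  simp [T2y] at h1 h2
  rcases hab with h' | h' <;> contradiction

lemma not_degX_T2z : ¬ DegX T2z := by
  rintro ⟨a, b, hab, h⟩
  have h1 := h 0 0
  have h2 := h 1 0
  simp [T2z] at h1 h2
  rcases hab with h' | h' <;> contradiction

lemma not_degX_T4 : ¬ DegX T4 := by
  rintro ⟨a, b, hab, h⟩
  have h1 := h 0 0
  have h2 := h 1 1
  simp [T4] at h1 h2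
  rcases hab with h' | h' <;> contradiction

lemma not_degY_T2z : ¬ DegY T2z := by
  rintro ⟨a, b, hab, h⟩
  have h1 := h 0 0
  have h2 := h 1 0
  simp [T2z] at h1 h2
  rcases hab with h' | h' <;> contradiction

lemma not_degY_T4 : ¬ DegY T4 := by
  rintro ⟨a, b, hab, h⟩
  have h1 := h 0 0
  have h2 := h 1 1
  simp [T4] at h1 h2
  rcases hab with h' | h' <;> contradiction

lemma not_degZ_T4 : ¬ DegZ T4 := by
  rintro ⟨a, b, hab, h⟩
  have h1 := h 0 0
  have h2 := h 1 1
  simp [T4] at h1 h2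
  rcases hab with h' | h' <;> contradiction

lemma canonical_unique {T T' : Fin 2 → Fin 2 → Fin 2 → ℂ}
    (hT : T ∈ ({T1, T2x, T2y, T2z, T3, T4} : Set (Fin 2 → Fin 2 → Fin 2 → ℂ)))
    (hT' : T' ∈ ({T1, T2x, T2y, T2z, T3, T4} : Set (Fin 2 → Fin 2 → Fin 2 → ℂ)))
    (h : TensorEquiv T T') : T = T' := by
  have hrk := Trk_eq_of_equiv h
  simp only [Set.mem_insert_iff, Set.mem_singleton_iff] at hT hT'
  rcases hT with rfl | rfl | rfl | rfl | rfl | rfl <;>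
    rcases hT' with rfl | rfl | rfl | rfl | rfl | rfl <;>
    first
      | rfl
      | (rw [Trk_T1, Trk_T2x] at hrk; norm_num at hrk)
      | (rw [Trk_T1, Trk_T2y] at hrk; norm_num at hrk)
      | (rw [Trk_T1, Trk_T2z] at hrk; norm_num at hrk)
      | (rw [Trk_T1, Trk_T3] at hrk; norm_num at hrk)
      | (rw [Trk_T1, Trk_T4] at hrk; norm_num at hrk)
      | (rw [Trk_T2x, Trk_T1] at hrk; norm_num at hrk)
      | (rw [Trk_T2y, Trk_T1] at hrk; norm_num at hrk)
      | (rw [Trk_T2z, Trk_T1] at hrk; norm_num at hrk)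
      | (rw [Trk_T3, Trk_T1] at hrk; norm_num at hrk)
      | (rw [Trk_T4, Trk_T1] at hrk; norm_num at hrk)
      | (rw [Trk_T2x, Trk_T3] at hrk; norm_num at hrk)
      | (rw [Trk_T2y, Trk_T3] at hrk; norm_num at hrk)
      | (rw [Trk_T2z, Trk_T3] at hrk; norm_num at hrk)
      | (rw [Trk_T4, Trk_T3] at hrk; norm_num at hrk)
      | (rw [Trk_T3, Trk_T2x] at hrk; norm_num at hrk)
      | (rw [Trk_T3, Trk_T2y] at hrk; norm_num at hrk)
      | (rw [Trk_T3, Trk_T2z] at hrk; norm_num at hrk)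
      | (rw [Trk_T3, Trk_T4] at hrk; norm_num at hrk)
      | exact absurd ((degX_iff_of_equiv h).mp degX_T2x) not_degX_T2y
      | exact absurd ((degX_iff_of_equiv h).mp degX_T2x) not_degX_T2z
      | exact absurd ((degX_iff_of_equiv h).mp degX_T2x) not_degX_T4
      | exact absurd ((degX_iff_of_equiv h).mpr degX_T2x) not_degX_T2y
      | exact absurd ((degX_iff_of_equiv h).mpr degX_T2x) not_degX_T2z
      | exact absurd ((degX_iff_of_equiv h).mpr degX_T2x) not_degX_T4
      | exact absurd ((degY_iff_of_equiv h).mp degY_T2y) not_degY_T2z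
      | exact absurd ((degY_iff_of_equiv h).mp degY_T2y) not_degY_T4
      | exact absurd ((degY_iff_of_equiv h).mpr degY_T2y) not_degY_T2z
      | exact absurd ((degY_iff_of_equiv h).mpr degY_T2y) not_degY_T4
      | exact absurd ((degZ_iff_of_equiv h).mp degZ_T2z) not_degZ_T4
      | exact absurd ((degZ_iff_of_equiv h).mpr degZ_T2z) not_degZ_T4
/-- find invertible C with (Cᵀ u) = e₀ -/
lemma vec_to_e0 (u : Fin 2 → ℂ) (hu : u 0 ≠ 0 ∨ u 1 ≠ 0) :
    ∃ C : Matrix (Fin 2) (Fin 2) ℂ, IsUnit C.det ∧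
      ∀ i, (∑ i', C i' i * u i') = if i = 0 then 1 else 0 := by
  rcases hu with h0 | h1
  · by_cases h0' : True
    · refine ⟨!![1 / u 0, -(u 1) / u 0; 0, 1], ?_, ?_⟩
      · rw [Matrix.det_fin_two_of]
        simp only [isUnit_iff_ne_zero]
        field_simp
        simp [h0]
      · intro i
        fin_cases i <;> simp [Fin.sum_univ_two] <;> field_simp <;> ring
    · exact absurd trivial h0'
  · by_cases h0 : u 0 = 0
    · refine ⟨!![0, 1; 1 / u 1, 0], ?_, ?_⟩
      · rw [Matrix.det_fin_two_of]
        simp only [isUnit_iff_ne_zero]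
        field_simp
        simp [h1]
      · intro i
        fin_cases i <;> simp [Fin.sum_univ_two, h0] <;> field_simp
    · refine ⟨!![1 / u 0, -(u 1) / u 0; 0, 1], ?_, ?_⟩
      · rw [Matrix.det_fin_two_of]
        simp only [isUnit_iff_ne_zero]
        field_simp
        simp [h0]
      · intro i
        fin_cases i <;> simp [Fin.sum_univ_two] <;> field_simp <;> ring

/-- transform of a pure outer product tensor -/
lemma equiv_outer (u v w u' v' w' : Fin 2 → ℂ) (C D E : Matrix (Fin 2) (Fin 2) ℂ)
    (hC : IsUnit C.det) (hD : IsUnit D.det) (hE : IsUnit E.det)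
    (hu : ∀ i, (∑ i', C i' i * u i') = u' i)
    (hv : ∀ j, (∑ j', D j' j * v j') = v' j)
    (hw : ∀ k, (∑ k', E k' k * w k') = w' k) :
    TensorEquiv (fun i j k => u i * v j * w k) (fun i j k => u' i * v' j * w' k) := by
  rw [tensorEquiv_iff]
  refine ⟨C, D, E, hC, hD, hE, ?_⟩
  funext i j k
  rw [← hu i, ← hv j, ← hw k]
  simp only [act, Fin.sum_univ_two]
  ring

/-- transform of a tensor of the form  u ⊗ W  (x-factor split off) -/
lemma equiv_xW (u u' : Fin 2 → ℂ) (W W' : Matrix (Fin 2) (Fin 2) ℂ)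
    (C D E : Matrix (Fin 2) (Fin 2) ℂ)
    (hC : IsUnit C.det) (hD : IsUnit D.det) (hE : IsUnit E.det)
    (hu : ∀ i, (∑ i', C i' i * u i') = u' i)
    (hW : ∀ j k, (∑ j', ∑ k', D j' j * E k' k * W j' k') = W' j k) :
    TensorEquiv (fun i j k => u i * W j k) (fun i j k => u' i * W' j k) := by
  rw [tensorEquiv_iff]
  refine ⟨C, D, E, hC, hD, hE, ?_⟩
  funext i j k
  rw [← hu i, ← hW j k]
  simp only [act, Fin.sum_univ_two]
  ring

/-- transform of a tensor of the form  v ⊗ W  (y-factor split off) -/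
lemma equiv_yW (v v' : Fin 2 → ℂ) (W W' : Matrix (Fin 2) (Fin 2) ℂ)
    (C D E : Matrix (Fin 2) (Fin 2) ℂ)
    (hC : IsUnit C.det) (hD : IsUnit D.det) (hE : IsUnit E.det)
    (hv : ∀ j, (∑ j', D j' j * v j') = v' j)
    (hW : ∀ i k, (∑ i', ∑ k', C i' i * E k' k * W i' k') = W' i k) :
    TensorEquiv (fun i j k => v j * W i k) (fun i j k => v' j * W' i k) := by
  rw [tensorEquiv_iff]
  refine ⟨C, D, E, hC, hD, hE, ?_⟩
  funext i j k
  rw [← hv j, ← hW i k]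
  simp only [act, Fin.sum_univ_two]
  ring

/-- entrywise inverse-multiplication identity -/
lemma inv_entries (W : Matrix (Fin 2) (Fin 2) ℂ) (h : IsUnit W.det) :
    ∀ a b, W⁻¹ a 0 * W 0 b + W⁻¹ a 1 * W 1 b = if a = b then (1 : ℂ) else 0 := by
  intro a b
  have h2 := congrFun (congrFun (Matrix.nonsing_inv_mul W h) a) b
  rw [Matrix.mul_apply] at h2
  simpa [Fin.sum_univ_two, Matrix.one_apply] using h2

/-- rank ≤ 1 factorization of a singular nonzero 2×2 matrix -/
lemma rk1 (M : Matrix (Fin 2) (Fin 2) ℂ) (i0 j0 : Fin 2) (hne : M i0 j0 ≠ 0)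
    (hdet : M.det = 0) :
    ∃ u v : Fin 2 → ℂ, (u 0 ≠ 0 ∨ u 1 ≠ 0) ∧ (v 0 ≠ 0 ∨ v 1 ≠ 0) ∧
      ∀ i j, M i j = u i * v j := by
  rw [Matrix.det_fin_two] at hdet
  by_cases h00 : M 0 0 ≠ 0
  · refine ⟨![M 0 0, M 1 0], ![1, M 0 1 / M 0 0], Or.inl (by simpa using h00),
      Or.inl (by norm_num), ?_⟩
    intro i j
    fin_cases i <;> fin_cases j <;> simp <;> field_simp <;> linear_combination hdet
  · push_neg at h00
    by_cases h01 : M 0 1 ≠ 0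
    · have h10 : M 1 0 = 0 := by
        rcases mul_eq_zero.mp (by linear_combination -hdet + M 1 1 * h00 : M 0 1 * M 1 0 = 0)
          with h' | h'
        · exact absurd h' h01
        · exact h'
      refine ⟨![M 0 1, M 1 1], ![0, 1], Or.inl (by simpa using h01), Or.inr (by norm_num), ?_⟩
      intro i j
      fin_cases i <;> fin_cases j <;> simp [h00, h10]
    · push_neg at h01
      by_cases h10 : M 1 0 ≠ 0
      · refine ⟨![0, 1], ![M 1 0, M 1 1], Or.inr (by norm_num), Or.inl (by simpa using h10), ?_⟩
        intro i j
        fin_cases i <;> fin_cases j <;> simp [h00, h01]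
      · push_neg at h10
        have h11 : M 1 1 ≠ 0 := by
          fin_cases i0 <;> fin_cases j0 <;> simp_all
        refine ⟨![0, 1], ![0, M 1 1], Or.inr (by norm_num), Or.inr (by simpa using h11), ?_⟩
        intro i j
        fin_cases i <;> fin_cases j <;> simp [h00, h01, h10]

/-- proportionality from vanishing cross product -/
lemma dep_vec (u u' : Fin 2 → ℂ) (hu : u 0 ≠ 0 ∨ u 1 ≠ 0)
    (hcross : u 0 * u' 1 - u 1 * u' 0 = 0) :
    ∃ c : ℂ, u' 0 = c * u 0 ∧ u' 1 = c * u 1 := by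
  by_cases h0 : u 0 ≠ 0
  · refine ⟨u' 0 / u 0, by field_simp, ?_⟩
    field_simp
    linear_combination hcross
  · push_neg at h0
    have h1 : u 1 ≠ 0 := by rcases hu with h | h; exact absurd h0 h; exact h
    have hu0 : u' 0 = 0 := by
      rcases mul_eq_zero.mp (by linear_combination -hcross + u' 1 * h0 : u 1 * u' 0 = 0)
        with h' | h'
      · exact absurd h' h1
      · exact h'
    refine ⟨u' 1 / u 1, by rw [hu0, h0]; ring, by field_simp⟩

/-- pencil determinant formula -/
lemma detP (M N : Matrix (Fin 2) (Fin 2) ℂ) (s t : ℂ) :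
    (s • M + t • N).det =
      s ^ 2 * M.det + s * t * ((M + N).det - M.det - N.det) + t ^ 2 * N.det := by
  simp only [Matrix.det_fin_two, Matrix.add_apply, Matrix.smul_apply, smul_eq_mul]
  ring

/-- Cayley–Hamilton-type identity: X·S = S·companion for S = [v, Xv] -/
lemma cyclic_vec (X : Matrix (Fin 2) (Fin 2) ℂ)
    (hns : ¬ (X 0 1 = 0 ∧ X 1 0 = 0 ∧ X 0 0 = X 1 1)) :
    ∃ S : Matrix (Fin 2) (Fin 2) ℂ, IsUnit S.det ∧
      X * S = S * !![0, -X.det; 1, X.trace] := by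
  by_cases h10 : X 1 0 ≠ 0
  · refine ⟨!![1, X 0 0; 0, X 1 0], ?_, ?_⟩
    · rw [Matrix.det_fin_two_of]; simpa using h10
    · ext i j
      fin_cases i <;> fin_cases j <;>
        simp [Matrix.mul_apply, Fin.sum_univ_two, Matrix.det_fin_two, Matrix.trace_fin_two] <;>
        ring
  · push_neg at h10
    by_cases h01 : X 0 1 ≠ 0
    · refine ⟨!![0, X 0 1; 1, X 1 1], ?_, ?_⟩
      · rw [Matrix.det_fin_two_of]; simpa using h01
      · ext i j
        fin_cases i <;> fin_cases j <;>
          simp [Matrix.mul_apply, Fin.sum_univ_two, Matrix.det_fin_two, Matrix.trace_fin_two] <;>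
          ring
    · push_neg at h01
      have hdd : X 0 0 ≠ X 1 1 := by
        intro h; exact hns ⟨h01, h10, h⟩
      refine ⟨!![1, X 0 0; 1, X 1 1], ?_, ?_⟩
      · rw [Matrix.det_fin_two_of]
        simp only [isUnit_iff_ne_zero]
        intro h; exact hdd (by linear_combination -h)
      · ext i j
        fin_cases i <;> fin_cases j <;>
          simp [Matrix.mul_apply, Fin.sum_univ_two, Matrix.det_fin_two, Matrix.trace_fin_two,
            h01, h10] <;>
          ring
/-- scalar version of the slice-combination move -/
lemma equiv_ofS_E' (M N : Matrix (Fin 2) (Fin 2) ℂ) (a b c d : ℂ) (h : a * d - c * b ≠ 0) :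
    TensorEquiv (ofS M N) (ofS (a • M + b • N) (c • M + d • N)) := by
  have h1 := equiv_ofS_E M N !![a, c; b, d] (by rw [Matrix.det_fin_two_of]; simpa using h)
  simpa using h1

lemma ofS_eq_T2z : ofS 1 0 = T2z := by
  funext i j k
  fin_cases i <;> fin_cases j <;> fin_cases k <;> simp [ofS, T2z, Matrix.one_apply]

lemma ofS_eq_T3 : ofS !![0, 1; 1, 0] !![1, 0; 0, 0] = T3 := by
  funext i j k
  fin_cases i <;> fin_cases j <;> fin_cases k <;> norm_num [ofS, T3]

lemma ofS_eq_T4 : ofS !![1, 0; 0, 0] !![0, 0; 0, 1] = T4 := by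
  funext i j k
  fin_cases i <;> fin_cases j <;> fin_cases k <;> norm_num [ofS, T4]

/-- Case: first slice invertible. -/
lemma caseP (M N : Matrix (Fin 2) (Fin 2) ℂ) (hM : IsUnit M.det) :
    ∃ T ∈ ({T1, T2x, T2y, T2z, T3, T4} : Set (Fin 2 → Fin 2 → Fin 2 → ℂ)),
      TensorEquiv (ofS M N) T := by
  have e1 : TensorEquiv (ofS M N) (ofS 1 (M⁻¹ * N)) := by
    have h1 := equiv_ofS_rc M N M⁻¹ 1 (Matrix.isUnit_nonsing_inv_det M hM) (by simp)
    rwa [Matrix.mul_one, Matrix.mul_one, Matrix.nonsing_inv_mul M hM] at h1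
  set X := M⁻¹ * N with hX
  by_cases hs : X 0 1 = 0 ∧ X 1 0 = 0 ∧ X 0 0 = X 1 1
  · -- scalar pencil : T2z
    have e2 := equiv_ofS_E' 1 X 1 0 (-(X 0 0)) 1 (by norm_num)
    have h1 : (1:ℂ) • (1 : Matrix (Fin 2) (Fin 2) ℂ) + (0:ℂ) • X = 1 := by simp
    have h2 : (-(X 0 0)) • (1 : Matrix (Fin 2) (Fin 2) ℂ) + (1:ℂ) • X = 0 := by
      ext a b
      fin_cases a <;> fin_cases b <;>
        simp [Matrix.one_apply, hs.1, hs.2.1, hs.2.2]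
    rw [h1, h2, ofS_eq_T2z] at e2
    exact ⟨T2z, by simp, e1.trans e2⟩
  · obtain ⟨S, hS, hXS⟩ := cyclic_vec X hs
    have e2 : TensorEquiv (ofS 1 X) (ofS 1 !![0, -X.det; 1, X.trace]) := by
      have h1 := equiv_ofS_rc 1 X S⁻¹ S (Matrix.isUnit_nonsing_inv_det S hS) hS
      have h2 : S⁻¹ * 1 * S = 1 := by rw [Matrix.mul_one, Matrix.nonsing_inv_mul S hS]
      have h3 : S⁻¹ * X * S = !![0, -X.det; 1, X.trace] := by
        rw [Matrix.mul_assoc, hXS, ← Matrix.mul_assoc, Matrix.nonsing_inv_mul S hS,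
          Matrix.one_mul]
      rwa [h2, h3] at h1
    set p := X.trace with hp
    set q := X.det with hq
    by_cases hΔ : p ^ 2 - 4 * q = 0
    · -- nilpotent case : T3
      have e3 := equiv_ofS_E' 1 !![0, -q; 1, p] 1 0 (-(p/2)) 1 (by norm_num)
      have h1 : (1:ℂ) • (1 : Matrix (Fin 2) (Fin 2) ℂ) + (0:ℂ) • !![0, -q; 1, p] = 1 := by simp
      have h2 : (-(p/2)) • (1 : Matrix (Fin 2) (Fin 2) ℂ) + (1:ℂ) • !![0, -q; 1, p] =
          !![-(p/2), -q; 1, p/2] := by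
        ext a b
        fin_cases a <;> fin_cases b <;> simp [Matrix.one_apply] <;> ring
      rw [h1, h2] at e3
      -- conjugate by S2 = [[1, -p/2],[0,1]]
      have hS2 : IsUnit (!![(1:ℂ), -(p/2); 0, 1]).det := by
        rw [Matrix.det_fin_two_of]; norm_num
      have hYS2 : !![-(p/2), -q; 1, p/2] * !![(1:ℂ), -(p/2); 0, 1] =
          !![(1:ℂ), -(p/2); 0, 1] * !![0, 0; 1, 0] := by
        ext a b
        fin_cases a <;> fin_cases b <;>
          simp [Matrix.mul_apply, Fin.sum_univ_two] <;>
          (try ring) <;> (try linear_combination hΔ / 4) <;> (try linear_combination -hΔ / 4)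
      have e4 : TensorEquiv (ofS 1 !![-(p/2), -q; 1, p/2]) (ofS 1 !![0, 0; 1, 0]) := by
        have h1' := equiv_ofS_rc 1 !![-(p/2), -q; 1, p/2]
          (!![(1:ℂ), -(p/2); 0, 1])⁻¹ !![(1:ℂ), -(p/2); 0, 1]
          (Matrix.isUnit_nonsing_inv_det _ hS2) hS2
        have h2' : (!![(1:ℂ), -(p/2); 0, 1])⁻¹ * 1 * !![(1:ℂ), -(p/2); 0, 1] = 1 := by
          rw [Matrix.mul_one, Matrix.nonsing_inv_mul _ hS2]
        have h3' : (!![(1:ℂ), -(p/2); 0, 1])⁻¹ * !![-(p/2), -q; 1, p/2] *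
            !![(1:ℂ), -(p/2); 0, 1] = !![0, 0; 1, 0] := by
          rw [Matrix.mul_assoc, hYS2, ← Matrix.mul_assoc, Matrix.nonsing_inv_mul _ hS2,
            Matrix.one_mul]
        rwa [h2', h3'] at h1'
      have e5 : TensorEquiv (ofS 1 !![0, 0; 1, 0]) (ofS !![0, 1; 1, 0] !![1, 0; 0, 0]) := by
        have h1' := equiv_ofS_rc 1 !![0, 0; 1, 0] !![(0:ℂ), 1; 1, 0] 1
          (by rw [Matrix.det_fin_two_of]; norm_num) (by simp)
        have h2' : !![(0:ℂ), 1; 1, 0] * 1 * 1 = !![0, 1; 1, 0] := by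
          rw [Matrix.mul_one, Matrix.mul_one]
        have h3' : !![(0:ℂ), 1; 1, 0] * !![0, 0; 1, 0] * 1 = !![1, 0; 0, 0] := by
          rw [Matrix.mul_one]
          ext a b
          fin_cases a <;> fin_cases b <;> simp [Matrix.mul_apply, Fin.sum_univ_two]
        rwa [h2', h3'] at h1'
      rw [ofS_eq_T3] at e5
      exact ⟨T3, by simp, e1.trans (e2.trans (e3.trans (e4.trans e5)))⟩
    · -- two distinct eigenvalues : T4
      obtain ⟨r, hr⟩ := IsAlgClosed.exists_pow_nat_eq (p ^ 2 - 4 * q) (n := 2) (by norm_num)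
      have hrne : r ≠ 0 := by
        intro h0; rw [h0] at hr; exact hΔ (by rw [← hr]; ring)
      have hS2 : IsUnit (!![-((p - r)/2), -((p + r)/2); 1, 1]).det := by
        rw [Matrix.det_fin_two_of]
        simp only [isUnit_iff_ne_zero]
        intro h0; exact hrne (by linear_combination h0)
      have hCS2 : !![0, -q; 1, p] * !![-((p - r)/2), -((p + r)/2); 1, 1] =
          !![-((p - r)/2), -((p + r)/2); 1, 1] * !![(p + r)/2, 0; 0, (p - r)/2] := by
        ext a b
        fin_cases a <;> fin_cases b <;>
          simp [Matrix.mul_apply, Fin.sum_univ_two] <;>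
          (try ring) <;> (try linear_combination hr / 4) <;> (try linear_combination -hr / 4)
      have e3 : TensorEquiv (ofS 1 !![0, -q; 1, p])
          (ofS 1 !![(p + r)/2, 0; 0, (p - r)/2]) := by
        have h1' := equiv_ofS_rc 1 !![0, -q; 1, p]
          (!![-((p - r)/2), -((p + r)/2); 1, 1])⁻¹ !![-((p - r)/2), -((p + r)/2); 1, 1]
          (Matrix.isUnit_nonsing_inv_det _ hS2) hS2
        have h2' : (!![-((p - r)/2), -((p + r)/2); 1, 1])⁻¹ * 1 *
            !![-((p - r)/2), -((p + r)/2); 1, 1] = 1 := by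
          rw [Matrix.mul_one, Matrix.nonsing_inv_mul _ hS2]
        have h3' : (!![-((p - r)/2), -((p + r)/2); 1, 1])⁻¹ * !![0, -q; 1, p] *
            !![-((p - r)/2), -((p + r)/2); 1, 1] = !![(p + r)/2, 0; 0, (p - r)/2] := by
          rw [Matrix.mul_assoc, hCS2, ← Matrix.mul_assoc, Matrix.nonsing_inv_mul _ hS2,
            Matrix.one_mul]
        rwa [h2', h3'] at h1'
      have e4 := equiv_ofS_E' 1 !![(p + r)/2, 0; 0, (p - r)/2]
        (-((p - r)/2)/r) (1/r) (((p + r)/2)/r) (-(1/r))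
        (by field_simp; intro h0; exact hrne (by field_simp at h0; linear_combination -h0/2))
      have h1 : (-((p - r)/2)/r) • (1 : Matrix (Fin 2) (Fin 2) ℂ) +
          (1/r) • !![(p + r)/2, 0; 0, (p - r)/2] = !![1, 0; 0, 0] := by
        ext a b
        fin_cases a <;> fin_cases b <;> simp [Matrix.one_apply] <;> field_simp <;> ring
      have h2 : (((p + r)/2)/r) • (1 : Matrix (Fin 2) (Fin 2) ℂ) +
          (-(1/r)) • !![(p + r)/2, 0; 0, (p - r)/2] = !![0, 0; 0, 1] := by
        ext a b
        fin_cases a <;> fin_cases b <;> simp [Matrix.one_apply] <;> field_simp <;> ring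
      rw [h1, h2, ofS_eq_T4] at e4
      exact ⟨T4, by simp, e1.trans (e2.trans (e3.trans e4))⟩

/-- a nonzero singular matrix in the first slice, zero second slice : T1 -/
lemma sliceM0 (K : Matrix (Fin 2) (Fin 2) ℂ) (i0 j0 : Fin 2) (hne : K i0 j0 ≠ 0)
    (hdet : K.det = 0) : TensorEquiv (ofS K 0) T1 := by
  obtain ⟨u, v, hun, hvn, huv⟩ := rk1 K i0 j0 hne hdet
  have hofs : ofS K 0 = fun i j k => u i * v j * (if k = 0 then (1:ℂ) else 0) := by
    funext i j k
    fin_cases k <;> simp [ofS, huv i j]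
  obtain ⟨C, hC, hCu⟩ := vec_to_e0 u hun
  obtain ⟨D, hD, hDv⟩ := vec_to_e0 v hvn
  have e1 := equiv_outer u v (fun k => if k = 0 then (1:ℂ) else 0)
    (fun i => if i = 0 then 1 else 0) (fun j => if j = 0 then 1 else 0)
    (fun k => if k = 0 then 1 else 0) C D 1 hC hD (by simp) hCu hDv
    (by intro k; fin_cases k <;> simp [Fin.sum_univ_two, Matrix.one_apply])
  have hfin : (fun i j k => (if i = 0 then (1:ℂ) else 0) * (if j = 0 then (1:ℂ) else 0) *
      (if k = 0 then (1:ℂ) else 0)) = T1 := by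
    funext i j k
    fin_cases i <;> fin_cases j <;> fin_cases k <;> simp [T1]
  rw [hfin] at e1
  rw [hofs]
  exact e1

/-- Case: every matrix in the z-pencil is singular. -/
lemma caseQ (M N : Matrix (Fin 2) (Fin 2) ℂ) (h0 : ¬(M = 0 ∧ N = 0))
    (hdM : M.det = 0) (hdN : N.det = 0) (hdMN : (M + N).det = 0) :
    ∃ T ∈ ({T1, T2x, T2y, T2z, T3, T4} : Set (Fin 2 → Fin 2 → Fin 2 → ℂ)),
      TensorEquiv (ofS M N) T := by
  by_cases hM0 : M = 0
  · -- swap slices, second is zero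
    have hN0 : N ≠ 0 := fun h => h0 ⟨hM0, h⟩
    obtain ⟨i0, j0, hne⟩ : ∃ i0 j0, N i0 j0 ≠ 0 := by
      by_contra hc
      push_neg at hc
      exact hN0 (by ext a b; simpa using hc a b)
    have e1 := equiv_ofS_E' M N 0 1 1 0 (by norm_num)
    have h1 : (0:ℂ) • M + (1:ℂ) • N = N := by simp
    have h2 : (1:ℂ) • M + (0:ℂ) • N = 0 := by simp [hM0]
    rw [h1, h2] at e1
    exact ⟨T1, by simp, e1.trans (sliceM0 N i0 j0 hne hdN)⟩
  · obtain ⟨i0, j0, hMe⟩ : ∃ i0 j0, M i0 j0 ≠ 0 := by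
      by_contra hc
      push_neg at hc
      exact hM0 (by ext a b; simpa using hc a b)
    set t := N i0 j0 / M i0 j0 with ht
    have hN'e : ((-t) • M + (1:ℂ) • N) i0 j0 = 0 := by
      simp only [Matrix.add_apply, Matrix.smul_apply, smul_eq_mul, one_mul, ht]
      field_simp
      ring
    have hdN' : ((-t) • M + (1:ℂ) • N).det = 0 := by
      rw [detP M N (-t) 1, hdM, hdN, hdMN]
      ring
    have e1 := equiv_ofS_E' M N 1 0 (-t) 1 (by norm_num)
    have h1 : (1:ℂ) • M + (0:ℂ) • N = M := by simp
    rw [h1] at e1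
    by_cases hN'0 : (-t) • M + (1:ℂ) • N = 0
    · rw [hN'0] at e1
      exact ⟨T1, by simp, e1.trans (sliceM0 M i0 j0 hMe hdM)⟩
    · obtain ⟨i1, j1, hN'e1⟩ : ∃ i1 j1, ((-t) • M + (1:ℂ) • N) i1 j1 ≠ 0 := by
        by_contra hc
        push_neg at hc
        exact hN'0 (by ext a b; simpa using hc a b)
      obtain ⟨u, v, hun, hvn, huv⟩ := rk1 M i0 j0 hMe hdM
      obtain ⟨u', v', hu'n, hv'n, hu'v'⟩ := rk1 ((-t) • M + (1:ℂ) • N) i1 j1 hN'e1 hdN'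
      -- cross product identity
      have hsum : (M + ((-t) • M + (1:ℂ) • N)).det = 0 := by
        have hmn : M + ((-t) • M + (1:ℂ) • N) = (1 - t) • M + (1:ℂ) • N := by
          ext a b
          simp only [Matrix.add_apply, Matrix.smul_apply, smul_eq_mul]
          ring
        rw [hmn, detP M N (1 - t) 1, hdM, hdN, hdMN]
        ring
      have hent : ∀ a b, (M + ((-t) • M + (1:ℂ) • N)) a b = u a * v b + u' a * v' b := by
        intro a b; rw [Matrix.add_apply, huv a b, hu'v' a b]
      have hcross : (u 0 * u' 1 - u 1 * u' 0) * (v 0 * v' 1 - v 1 * v' 0) = 0 := by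
        rw [Matrix.det_fin_two, hent 0 0, hent 1 1, hent 0 1, hent 1 0] at hsum
        linear_combination hsum
      have hu'v'' : ∀ a b, -(t * M a b) + N a b = u' a * v' b := by
        intro a b
        have h' := hu'v' a b
        simpa using h'
      have hMe' : u i0 * v j0 ≠ 0 := by rwa [huv i0 j0] at hMe
      rcases mul_eq_zero.mp hcross with hcu | hcv
      · -- shared x-factor : T2x
        obtain ⟨c, hc0, hc1⟩ := dep_vec u u' hun hcu
        have huall : ∀ i, u' i = c * u i := by
          intro i; fin_cases i; exact hc0; exact hc1
        have hvcross : v 0 * v' 1 - v 1 * v' 0 ≠ 0 := by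
          intro hvc
          obtain ⟨c', hc'0, hc'1⟩ := dep_vec v v' hvn hvc
          have hvall : ∀ j, v' j = c' * v j := by
            intro j; fin_cases j; exact hc'0; exact hc'1
          have h1' : c * c' * (u i0 * v j0) = 0 := by
            have h2' := hN'e
            rw [hu'v' i0 j0, huall i0, hvall j0] at h2'
            linear_combination h2'
          have hcc' : c * c' = 0 := by
            rcases mul_eq_zero.mp h1' with h' | h'
            · exact h'
            · exact absurd h' hMe'
          apply hN'e1
          rw [hu'v' i1 j1, huall i1, hvall j1]
          linear_combination (u i1 * v j1) * hcc'
        have hcne : c ≠ 0 := by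
          intro h
          rcases hu'n with h' | h'
          · exact h' (by rw [hc0, h]; ring)
          · exact h' (by rw [hc1, h]; ring)
        set W : Matrix (Fin 2) (Fin 2) ℂ := !![v 0, c * v' 0; v 1, c * v' 1] with hW
        have hWdet : IsUnit W.det := by
          rw [hW, Matrix.det_fin_two_of]
          simp only [isUnit_iff_ne_zero]
          intro hcon
          apply hvcross
          have := mul_ne_zero hcne hvcross
          by_contra h'
          exact this (by linear_combination hcon)
        have hofs : ofS M ((-t) • M + (1:ℂ) • N) = fun i j k => u i * W j k := by
          funext i j k
          fin_cases j <;> fin_cases k <;> simp [ofS, hW]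
          · exact huv i 0
          · linear_combination hu'v'' i 0 + v' 0 * huall i
          · exact huv i 1
          · linear_combination hu'v'' i 1 + v' 1 * huall i
        obtain ⟨C, hC, hCu⟩ := vec_to_e0 u hun
        have e2 := equiv_xW u (fun i => if i = 0 then 1 else 0) W
          (Matrix.of fun j k => if j = k then (1:ℂ) else 0) C W⁻¹ᵀ 1 hC
          (by rw [Matrix.det_transpose]; exact Matrix.isUnit_nonsing_inv_det W hWdet)
          (by simp) hCu
          (by
            intro j k
            fin_cases k <;>
              simp only [Fin.sum_univ_two, Matrix.transpose_apply, Matrix.one_apply,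
                Matrix.of_apply] <;>
              norm_num <;>
              simpa using inv_entries W hWdet j _)
        have hfin : (fun i j k => (if i = 0 then (1:ℂ) else 0) *
            (Matrix.of fun j k => if j = k then (1:ℂ) else 0) j k) = T2x := by
          funext i j k
          fin_cases i <;> fin_cases j <;> fin_cases k <;> simp [T2x]
        rw [hfin] at e2
        rw [hofs] at e1
        exact ⟨T2x, by simp, e1.trans e2⟩
      · -- shared y-factor : T2y
        obtain ⟨c', hc'0, hc'1⟩ := dep_vec v v' hvn hcv
        have hvall : ∀ j, v' j = c' * v j := by
          intro j; fin_cases j; exact hc'0; exact hc'1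
        have hucross : u 0 * u' 1 - u 1 * u' 0 ≠ 0 := by
          intro huc
          obtain ⟨c, hc0, hc1⟩ := dep_vec u u' hun huc
          have huall : ∀ i, u' i = c * u i := by
            intro i; fin_cases i; exact hc0; exact hc1
          have h1' : c * c' * (u i0 * v j0) = 0 := by
            have h2' := hN'e
            rw [hu'v' i0 j0, huall i0, hvall j0] at h2'
            linear_combination h2'
          have hcc' : c * c' = 0 := by
            rcases mul_eq_zero.mp h1' with h' | h'
            · exact h'
            · exact absurd h' hMe'
          apply hN'e1
          rw [hu'v' i1 j1, huall i1, hvall j1]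
          linear_combination (u i1 * v j1) * hcc'
        have hc'ne : c' ≠ 0 := by
          intro h
          rcases hv'n with h' | h'
          · exact h' (by rw [hc'0, h]; ring)
          · exact h' (by rw [hc'1, h]; ring)
        set W : Matrix (Fin 2) (Fin 2) ℂ := !![u 0, c' * u' 0; u 1, c' * u' 1] with hW
        have hWdet : IsUnit W.det := by
          rw [hW, Matrix.det_fin_two_of]
          simp only [isUnit_iff_ne_zero]
          intro hcon
          have := mul_ne_zero hc'ne hucross
          exact this (by linear_combination hcon)
        have hofs : ofS M ((-t) • M + (1:ℂ) • N) = fun i j k => v j * W i k := by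
          funext i j k
          fin_cases i <;> fin_cases k <;> simp [ofS, hW]
          · rw [huv 0 j]; ring
          · linear_combination hu'v'' 0 j + u' 0 * hvall j
          · rw [huv 1 j]; ring
          · linear_combination hu'v'' 1 j + u' 1 * hvall j
        obtain ⟨D, hD, hDv⟩ := vec_to_e0 v hvn
        have e2 := equiv_yW v (fun j => if j = 0 then 1 else 0) W
          (Matrix.of fun i k => if i = k then (1:ℂ) else 0) W⁻¹ᵀ D 1
          (by rw [Matrix.det_transpose]; exact Matrix.isUnit_nonsing_inv_det W hWdet)
          hD (by simp) hDv
          (by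
            intro i k
            fin_cases k <;>
              simp only [Fin.sum_univ_two, Matrix.transpose_apply, Matrix.one_apply,
                Matrix.of_apply] <;>
              norm_num <;>
              simpa using inv_entries W hWdet i _)
        have hfin : (fun i j k => (if j = 0 then (1:ℂ) else 0) *
            (Matrix.of fun i k => if i = k then (1:ℂ) else 0) i k) = T2y := by
          funext i j k
          fin_cases i <;> fin_cases j <;> fin_cases k <;> simp [T2y]
        rw [hfin] at e2
        rw [hofs] at e1
        exact ⟨T2y, by simp, e1.trans e2⟩

/-- Existence of a canonical form. -/
lemma exists_canonical (A : Fin 2 → Fin 2 → Fin 2 → ℂ) (hA : A ≠ 0) :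
    ∃ T ∈ ({T1, T2x, T2y, T2z, T3, T4} : Set (Fin 2 → Fin 2 → Fin 2 → ℂ)),
      TensorEquiv A T := by
  have hofs := ofS_self A
  set M := Matrix.of fun i j => A i j 0 with hM
  set N := Matrix.of fun i j => A i j 1 with hN
  have hnz : ¬(M = 0 ∧ N = 0) := by
    rintro ⟨h1, h2⟩
    apply hA
    funext i j k
    rw [hofs]
    fin_cases k <;> simp [ofS, h1, h2]
  by_cases hMdet : IsUnit M.det
  · obtain ⟨T, hT, hTe⟩ := caseP M N hMdet
    exact ⟨T, hT, (hofs ▸ hTe : TensorEquiv A T)⟩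
  · have hM0 : M.det = 0 := by rwa [isUnit_iff_ne_zero, not_not] at hMdet
    by_cases hNdet : IsUnit N.det
    · have e1 := equiv_ofS_E' M N 0 1 1 0 (by norm_num)
      have h1 : (0:ℂ) • M + (1:ℂ) • N = N := by simp
      have h2 : (1:ℂ) • M + (0:ℂ) • N = M := by simp
      rw [h1, h2] at e1
      obtain ⟨T, hT, hTe⟩ := caseP N M hNdet
      exact ⟨T, hT, (hofs ▸ (e1.trans hTe) : TensorEquiv A T)⟩
    · have hN0 : N.det = 0 := by rwa [isUnit_iff_ne_zero, not_not] at hNdet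
      by_cases hMN : IsUnit (M + N).det
      · have e1 := equiv_ofS_E' M N 1 1 0 1 (by norm_num)
        have h1 : (1:ℂ) • M + (1:ℂ) • N = M + N := by simp
        have h2 : (0:ℂ) • M + (1:ℂ) • N = N := by simp
        rw [h1, h2] at e1
        obtain ⟨T, hT, hTe⟩ := caseP (M + N) N hMN
        exact ⟨T, hT, (hofs ▸ (e1.trans hTe) : TensorEquiv A T)⟩
      · have hMN0 : (M + N).det = 0 := by rwa [isUnit_iff_ne_zero, not_not] at hMN
        obtain ⟨T, hT, hTe⟩ := caseQ M N hnz hM0 hN0 hMN0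
        exact ⟨T, hT, (hofs ▸ hTe : TensorEquiv A T)⟩


end TensorAux

/-- every nonzero 2×2×2 hypermatrix is equivalent to exactly one
of the canonical forms I, II (in its three versions, one for each choice of the
special factor), III, IV; and these have tensor ranks 1, 2, 2, 2, 3, 2. -/
theorem classification_2_2_2 :
    (∀ A : Fin 2 → Fin 2 → Fin 2 → ℂ, A ≠ 0 →
      ∃! T, T ∈ ({T1, T2x, T2y, T2z, T3, T4} : Set (Fin 2 → Fin 2 → Fin 2 → ℂ)) ∧
        TensorEquiv A T) ∧
    Trk T1 = 1 ∧ Trk T2x = 2 ∧ Trk T2y = 2 ∧ Trk T2z = 2 ∧ Trk T3 = 3 ∧ Trk T4 = 2 := by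
  refine ⟨?_, Trk_T1, Trk_T2x, Trk_T2y, Trk_T2z, Trk_T3, Trk_T4⟩
  intro A hA
  obtain ⟨T, hTmem, hTe⟩ := exists_canonical A hA
  refine ⟨T, ⟨hTmem, hTe⟩, ?_⟩
  rintro T' ⟨hT'mem, hT'e⟩
  exact canonical_unique hT'mem hTmem (hT'e.symm.trans hTe)
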